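/- Let f : {−1,1}^n → {−1,1}, let s ≥ 2 and ε ∈ (0,1), and suppose Pr_{x uniform}[f(x) ≠ T*(x)] ≤ opt for some decision tree T* of size s. Set τ = ε/log₂ s, d = ⌈log₂(s/ε)⌉, and let δ ≤ ε/log₂ s. Then every decision tree T : {−1,1}^n → {−1,1} of size at most s and depth at most d that minimizes dist(T, f_δ) among all size-s, depth-d decision trees that are everywhere τ-influential with respect to f_δ satisfies Pr_{x uniform}[T(x) ≠ f(x)] ≤ opt + 4ε; in particular at least one such tree exists and satisfies this bound. -/

import Mathlib

/-!
Decision trees over {-1,1}^n and noise smoothing; a point of the cube is encoded as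
`x : Fin n → Bool` (`true` encodes 1, `false` encodes -1).
-/

/-- Decision trees with values in `Y` over `n` boolean variables. -/
inductive DTree (Y : Type) (n : ℕ) : Type
  | leaf : Y → DTree Y n
  | node : Fin n → DTree Y n → DTree Y n → DTree Y n

namespace DTree

variable {Y : Type} {n : ℕ}

/-- The function computed by a decision tree: at a node labeled `i`, follow the right
subtree if `x_i = 1` (`x i = true`) and the left subtree if `x_i = -1` (`x i = false`). -/
def eval : DTree Y n → (Fin n → Bool) → Y
  | .leaf y, _ => y
  | .node i l r, x => if x i then r.eval x else l.eval x

/-- The size of a decision tree is its number of leaves. -/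
def size : DTree Y n → ℕ
  | .leaf _ => 1
  | .node _ l r => l.size + r.size

/-- The depth of a decision tree: the length of its longest root-to-leaf path. -/
def depth : DTree Y n → ℕ
  | .leaf _ => 0
  | .node _ l r => max l.depth r.depth + 1

end DTree

/-- The ±1 real value encoded by a boolean: `true ↦ 1`, `false ↦ -1`. -/
noncomputable def bval (b : Bool) : ℝ := if b then 1 else -1

/-- `Pr_{x uniform}[f(x) ≠ g(x)]` for boolean-valued functions on the cube. -/
noncomputable def probNe {n : ℕ} (f g : (Fin n → Bool) → Bool) : ℝ :=
  (∑ x : Fin n → Bool, if f x = g x then (0 : ℝ) else 1) / 2 ^ n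

/-- The `δ`-smoothed version of `g`: `g_δ(x) = E[g(x̃)]`, where `x̃` is obtained from `x`
by flipping each coordinate independently with probability `δ/2` (equivalently,
rerandomizing each coordinate independently with probability `δ`). -/
noncomputable def smooth {n : ℕ} (δ : ℝ) (g : (Fin n → Bool) → ℝ) (x : Fin n → Bool) : ℝ :=
  ∑ y : Fin n → Bool, (∏ i : Fin n, if y i = x i then 1 - δ / 2 else δ / 2) * g y

/-- `dist(u, v) = E_{x uniform}[|u(x) − v(x)|]` for real-valued functions on the cube. -/
noncomputable def distR {n : ℕ} (u v : (Fin n → Bool) → ℝ) : ℝ :=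
  (∑ x : Fin n → Bool, |u x - v x|) / 2 ^ n

/-- The influence of variable `i` on a real-valued `u`, with respect to the absolute-value
metric: `Inf_i(u) = E_x[|u(x) − u(x^{~i})|]`, where `x` is uniform and `x^{~i}` is `x` with
its `i`-th coordinate rerandomized. -/
noncomputable def inflR {n : ℕ} (u : (Fin n → Bool) → ℝ) (i : Fin n) : ℝ :=
  (∑ x : Fin n → Bool,
      (|u x - u (Function.update x i true)| +
        |u x - u (Function.update x i false)|) / 2) / 2 ^ n

/-- A (boolean-leaved) tree `T` is everywhere `τ`-influential with respect to a real-valued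
`u`: for every internal node `v` of `T`, the variable `i(v)` queried at `v` has influence at
least `τ` on the restriction `u_v` of `u` by the root-to-`v` path in `T`. -/
def EwInflR {n : ℕ} (τ : ℝ) : ((Fin n → Bool) → ℝ) → DTree Bool n → Prop
  | _, .leaf _ => True
  | u, .node i l r =>
      τ ≤ inflR u i ∧
      EwInflR τ (fun x => u (Function.update x i false)) l ∧
      EwInflR τ (fun x => u (Function.update x i true)) r

namespace S19
open Finset

variable {n : ℕ}

/-! ### Half-sum machinery -/

lemma flip_invol (i : Fin n) :
    Function.Involutive (fun x : Fin n → Bool => Function.update x i (!(x i))) := by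
  intro x
  funext j
  by_cases h : j = i
  · subst h; simp
  · simp [Function.update_of_ne h]

lemma sum_flip (i : Fin n) (F : (Fin n → Bool) → ℝ) :
    ∑ x : Fin n → Bool, F (Function.update x i (!(x i))) = ∑ x : Fin n → Bool, F x :=
  Equiv.sum_comp ((flip_invol i).toPerm _) F

/-- Key halving lemma: summing an `i`-independent function over the half-cube. -/
lemma sum_ite_half (i : Fin n) (F : (Fin n → Bool) → ℝ)
    (hF : ∀ x b, F (Function.update x i b) = F x) :
    ∑ x : Fin n → Bool, (if x i then F x else 0) = (∑ x : Fin n → Bool, F x) / 2 := by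
  have h1 : ∑ x : Fin n → Bool, (if x i then F x else 0)
      = ∑ x : Fin n → Bool, (if x i then (0:ℝ) else F x) := by
    have := sum_flip i (fun x => if x i then F x else 0)
    rw [← this]
    apply Finset.sum_congr rfl
    intro x _
    rw [Function.update_self, hF]
    cases hx : x i <;> simp [hx]
  have h2 : ∑ x : Fin n → Bool, ((if x i then F x else 0) + (if x i then 0 else F x))
      = ∑ x : Fin n → Bool, F x := by
    apply Finset.sum_congr rfl
    intro x _
    cases hx : x i <;> simp [hx]
  rw [Finset.sum_add_distrib] at h2
  linarith

lemma sum_ite_half' (i : Fin n) (F : (Fin n → Bool) → ℝ)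
    (hF : ∀ x b, F (Function.update x i b) = F x) :
    ∑ x : Fin n → Bool, (if x i then 0 else F x) = (∑ x : Fin n → Bool, F x) / 2 := by
  have h2 : ∑ x : Fin n → Bool, ((if x i then F x else 0) + (if x i then 0 else F x))
      = ∑ x : Fin n → Bool, F x := by
    apply Finset.sum_congr rfl
    intro x _
    cases hx : x i <;> simp [hx]
  rw [Finset.sum_add_distrib, sum_ite_half i F hF] at h2
  linarith

lemma sum_ite_pair (i : Fin n) (A B : (Fin n → Bool) → ℝ)
    (hA : ∀ x b, A (Function.update x i b) = A x)
    (hB : ∀ x b, B (Function.update x i b) = B x) :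
    ∑ x : Fin n → Bool, (if x i then A x else B x)
      = (∑ x : Fin n → Bool, A x) / 2 + (∑ x : Fin n → Bool, B x) / 2 := by
  have h : ∀ x : Fin n → Bool, (if x i then A x else B x)
      = (if x i then A x else 0) + (if x i then 0 else B x) := by
    intro x; cases hx : x i <;> simp [hx]
  rw [Finset.sum_congr rfl (fun x _ => h x), Finset.sum_add_distrib,
    sum_ite_half i A hA, sum_ite_half' i B hB]

end S19

namespace S19
open Finset

variable {n : ℕ}

/-! ### Tree predicates -/

def Queries : DTree Bool n → Fin n → Prop
  | .leaf _, _ => False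
  | .node i l r, j => i = j ∨ Queries l j ∨ Queries r j

def ReqFree : DTree Bool n → Prop
  | .leaf _ => True
  | .node i l r => ¬ Queries l i ∧ ¬ Queries r i ∧ ReqFree l ∧ ReqFree r

def plen : DTree Bool n → (Fin n → Bool) → ℕ
  | .leaf _, _ => 0
  | .node i l r, x => (if x i then plen r x else plen l x) + 1

lemma size_pos (T : DTree Bool n) : 1 ≤ T.size := by
  induction T with
  | leaf b => exact le_refl 1
  | node i l r ihl ihr => simp only [DTree.size]; omega

lemma eval_update_not_queries (T : DTree Bool n) (j : Fin n) (h : ¬ Queries T j)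
    (x : Fin n → Bool) (b : Bool) : T.eval (Function.update x j b) = T.eval x := by
  induction T with
  | leaf c => rfl
  | node i l r ihl ihr =>
    simp only [Queries, not_or] at h
    obtain ⟨hij, hl, hr⟩ := h
    show (if Function.update x j b i then r.eval (Function.update x j b)
        else l.eval (Function.update x j b)) = (if x i then r.eval x else l.eval x)
    rw [Function.update_of_ne hij]
    cases hx : x i
    · simpa [hx] using ihl hl
    · simpa [hx] using ihr hr

lemma plen_update_not_queries (T : DTree Bool n) (j : Fin n) (h : ¬ Queries T j)
    (x : Fin n → Bool) (b : Bool) : plen T (Function.update x j b) = plen T x := by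
  induction T with
  | leaf c => rfl
  | node i l r ihl ihr =>
    simp only [Queries, not_or] at h
    obtain ⟨hij, hl, hr⟩ := h
    show (if Function.update x j b i then plen r (Function.update x j b)
        else plen l (Function.update x j b)) + 1
        = (if x i then plen r x else plen l x) + 1
    rw [Function.update_of_ne hij]
    cases hx : x i
    · simp [hx, ihl hl]
    · simp [hx, ihr hr]

/-- i-independence of a real-valued function on the cube. -/
def UIndep (i : Fin n) (u : (Fin n → Bool) → ℝ) : Prop :=
  ∀ x b, u (Function.update x i b) = u x

lemma uIndep_update (i : Fin n) (u : (Fin n → Bool) → ℝ) (c : Bool) :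
    UIndep i (fun x => u (Function.update x i c)) := by
  intro x b
  simp [Function.update_idem]

lemma uIndep_update_ne {i j : Fin n} (hij : i ≠ j) (u : (Fin n → Bool) → ℝ) (c : Bool)
    (h : UIndep j u) : UIndep j (fun x => u (Function.update x i c)) := by
  intro x b
  show u (Function.update (Function.update x j b) i c) = u (Function.update x i c)
  rw [Function.update_comm (Ne.symm hij) b c x, h]

lemma inflR_eq_zero_of_uIndep {i : Fin n} {u : (Fin n → Bool) → ℝ} (h : UIndep i u) :
    inflR u i = 0 := by
  unfold inflR
  rw [Finset.sum_eq_zero, zero_div]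
  intro x _
  rw [h x true, h x false]
  simp

end S19

namespace S19
open Finset

variable {n : ℕ}

/-! ### The noise kernel -/

noncomputable def ker (δ : ℝ) (x y : Fin n → Bool) : ℝ :=
  ∏ i : Fin n, if y i = x i then 1 - δ / 2 else δ / 2

lemma smooth_eq_ker (δ : ℝ) (g : (Fin n → Bool) → ℝ) (x : Fin n → Bool) :
    smooth δ g x = ∑ y : Fin n → Bool, ker δ x y * g y := rfl

lemma ker_nonneg {δ : ℝ} (h0 : 0 ≤ δ) (h2 : δ ≤ 2) (x y : Fin n → Bool) :
    0 ≤ ker δ x y := by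
  apply Finset.prod_nonneg
  intro i _
  by_cases h : y i = x i <;> simp [h] <;> linarith

lemma ker_symm (δ : ℝ) (x y : Fin n → Bool) : ker δ x y = ker δ y x := by
  apply Finset.prod_congr rfl
  intro i _
  by_cases h : y i = x i
  · rw [if_pos h, if_pos h.symm]
  · rw [if_neg h, if_neg (fun hh => h hh.symm)]

lemma ker_rowsum (δ : ℝ) (x : Fin n → Bool) :
    ∑ y : Fin n → Bool, ker δ x y = 1 := by
  have key := Finset.prod_univ_sum (fun _ : Fin n => (Finset.univ : Finset Bool))
    (fun i b => if b = x i then 1 - δ / 2 else δ / 2)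
  rw [Fintype.piFinset_univ] at key
  have h1 : ∀ i : Fin n, (∑ b : Bool, if b = x i then 1 - δ / 2 else δ / 2) = 1 := by
    intro i
    cases hx : x i <;> simp [Fintype.sum_bool, hx]
  rw [Finset.prod_congr rfl (fun i _ => h1 i), Finset.prod_const_one] at key
  exact key.symm

lemma ker_flipsum (δ : ℝ) (x : Fin n → Bool) (i : Fin n) :
    ∑ y : Fin n → Bool, ker δ x y * (if y i = x i then (0:ℝ) else 1) = δ / 2 := by
  have hw : ∀ y : Fin n → Bool, ker δ x y * (if y i = x i then (0:ℝ) else 1)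
      = ∏ j : Fin n, ((if y j = x j then 1 - δ / 2 else δ / 2) *
          (if j = i then (if y j = x j then (0:ℝ) else 1) else 1)) := by
    intro y
    rw [Finset.prod_mul_distrib]
    unfold ker
    congr 1
    rw [Finset.prod_ite_eq' Finset.univ i (fun j => if y j = x j then (0:ℝ) else 1)]
    simp
  rw [Finset.sum_congr rfl (fun y _ => hw y)]
  have key := Finset.prod_univ_sum (fun _ : Fin n => (Finset.univ : Finset Bool))
    (fun j b => (if b = x j then 1 - δ / 2 else δ / 2) *
        (if j = i then (if b = x j then (0:ℝ) else 1) else 1))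
  rw [Fintype.piFinset_univ] at key
  rw [← key]
  have h1 : ∀ j : Fin n, (∑ b : Bool, (if b = x j then 1 - δ / 2 else δ / 2) *
      (if j = i then (if b = x j then (0:ℝ) else 1) else 1))
      = if j = i then δ / 2 else 1 := by
    intro j
    by_cases hj : j = i
    · subst hj
      cases hx : x j <;> simp [Fintype.sum_bool, hx]
    · cases hx : x j <;> simp [Fintype.sum_bool, hx, hj]
  rw [Finset.prod_congr rfl (fun j _ => h1 j), Finset.prod_ite_eq' Finset.univ i (fun _ => δ/2)]
  simp

end S19

namespace S19
open Finset

variable {n : ℕ}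

/-! ### Coupling lemmas -/

noncomputable def ind (a b : Bool) : ℝ := if a = b then 0 else 1

lemma ind_nonneg (a b : Bool) : 0 ≤ ind a b := by
  unfold ind; split <;> norm_num

lemma ind_symm (a b : Bool) : ind a b = ind b a := by
  unfold ind
  by_cases h : a = b
  · rw [if_pos h, if_pos h.symm]
  · rw [if_neg h, if_neg (fun hh => h hh.symm)]

lemma ind_triangle (a b c : Bool) : ind a c ≤ ind a b + ind b c := by
  unfold ind
  cases a <;> cases b <;> cases c <;> simp

lemma ind_le_one (a b : Bool) : ind a b ≤ 1 := by
  unfold ind; split <;> norm_num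

lemma probNe_eq_ind (f g : (Fin n → Bool) → Bool) :
    probNe f g = (∑ x : Fin n → Bool, ind (f x) (g x)) / 2 ^ n := rfl

lemma abs_bval_sub_bval (a b : Bool) : |bval a - bval b| = 2 * ind a b := by
  cases a <;> cases b <;> simp [bval, ind] <;> norm_num

lemma probNe_eq_half_distR (f g : (Fin n → Bool) → Bool) :
    probNe f g = distR (fun x => bval (f x)) (fun x => bval (g x)) / 2 := by
  rw [probNe_eq_ind]
  unfold distR
  rw [Finset.sum_congr rfl (fun x _ => abs_bval_sub_bval (f x) (g x)), ← Finset.mul_sum]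
  ring

lemma distR_symm (u v : (Fin n → Bool) → ℝ) : distR u v = distR v u := by
  unfold distR
  rw [Finset.sum_congr rfl (fun x _ => abs_sub_comm (u x) (v x))]

lemma distR_triangle (u v w : (Fin n → Bool) → ℝ) : distR u w ≤ distR u v + distR v w := by
  unfold distR
  rw [← add_div]
  gcongr
  rw [← Finset.sum_add_distrib]
  apply Finset.sum_le_sum
  intro x _
  calc |u x - w x| = |(u x - v x) + (v x - w x)| := by ring_nf
    _ ≤ |u x - v x| + |v x - w x| := abs_add_le _ _

lemma distR_nonneg (u v : (Fin n → Bool) → ℝ) : 0 ≤ distR u v := by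
  unfold distR
  positivity

lemma distR_le_two (f g : (Fin n → Bool) → Bool) :
    distR (fun x => bval (f x)) (fun x => bval (g x)) ≤ 2 := by
  unfold distR
  rw [div_le_iff₀ (by positivity)]
  calc ∑ x : Fin n → Bool, |bval (f x) - bval (g x)|
      ≤ ∑ _x : Fin n → Bool, (2:ℝ) := by
        apply Finset.sum_le_sum
        intro x _
        rw [abs_bval_sub_bval]
        have := ind_le_one (f x) (g x)
        linarith
    _ = 2 * 2 ^ n := by
        rw [Finset.sum_const, Finset.card_univ]
        simp [mul_comm]
end S19

namespace S19
open Finset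

variable {n : ℕ}

/-- The coupled disagreement quantity `M`. -/
noncomputable def MQ (δ : ℝ) (f : (Fin n → Bool) → Bool) (T : DTree Bool n) : ℝ :=
  (∑ x : Fin n → Bool, ∑ y : Fin n → Bool, ker δ x y * ind (f y) (T.eval x)) / 2 ^ n

lemma abs_bval_sub_smooth {δ : ℝ} (h0 : 0 ≤ δ) (h2 : δ ≤ 2)
    (f : (Fin n → Bool) → Bool) (c : Bool) (x : Fin n → Bool) :
    |bval c - smooth δ (fun z => bval (f z)) x|
      = 2 * ∑ y : Fin n → Bool, ker δ x y * ind (f y) c := by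
  have hpt : ∀ y : Fin n → Bool, ker δ x y * bval c - ker δ x y * bval (f y)
      = bval c * (2 * (ker δ x y * ind (f y) c)) := by
    intro y
    have hd : bval c - bval (f y) = bval c * (2 * ind (f y) c) := by
      cases c <;> cases hf : f y <;> simp [bval, ind] <;> norm_num
    calc ker δ x y * bval c - ker δ x y * bval (f y)
        = ker δ x y * (bval c - bval (f y)) := by ring
      _ = bval c * (2 * (ker δ x y * ind (f y) c)) := by rw [hd]; ring
  have key : bval c - smooth δ (fun z => bval (f z)) x
      = bval c * (2 * ∑ y : Fin n → Bool, ker δ x y * ind (f y) c) := by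
    rw [smooth_eq_ker]
    calc bval c - ∑ y : Fin n → Bool, ker δ x y * bval (f y)
        = (∑ y : Fin n → Bool, ker δ x y * bval c)
            - ∑ y : Fin n → Bool, ker δ x y * bval (f y) := by
          rw [← Finset.sum_mul, ker_rowsum, one_mul]
      _ = ∑ y : Fin n → Bool, (ker δ x y * bval c - ker δ x y * bval (f y)) := by
          rw [Finset.sum_sub_distrib]
      _ = ∑ y : Fin n → Bool, bval c * (2 * (ker δ x y * ind (f y) c)) :=
          Finset.sum_congr rfl (fun y _ => hpt y)
      _ = bval c * (2 * ∑ y : Fin n → Bool, ker δ x y * ind (f y) c) := by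
          rw [← Finset.mul_sum, ← Finset.mul_sum]
  rw [key, abs_mul]
  have habs : |bval c| = 1 := by cases c <;> simp [bval]
  rw [habs, one_mul]
  apply abs_of_nonneg
  have : 0 ≤ ∑ y : Fin n → Bool, ker δ x y * ind (f y) c :=
    Finset.sum_nonneg (fun y _ => mul_nonneg (ker_nonneg h0 h2 x y) (ind_nonneg _ _))
  linarith

lemma distR_eq_two_MQ {δ : ℝ} (h0 : 0 ≤ δ) (h2 : δ ≤ 2)
    (f : (Fin n → Bool) → Bool) (T : DTree Bool n) :
    distR (fun x => bval (T.eval x)) (smooth δ (fun z => bval (f z))) = 2 * MQ δ f T := by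
  unfold distR MQ
  rw [Finset.sum_congr rfl (fun x _ => abs_bval_sub_smooth h0 h2 f (T.eval x) x),
    ← Finset.mul_sum]
  ring

lemma probNe_eq_double (δ : ℝ) (f : (Fin n → Bool) → Bool) (g : (Fin n → Bool) → Bool) :
    probNe g f = (∑ x : Fin n → Bool, ∑ y : Fin n → Bool, ker δ x y * ind (f y) (g y)) / 2 ^ n := by
  rw [probNe_eq_ind]
  congr 1
  rw [Finset.sum_comm]
  apply Finset.sum_congr rfl
  intro y _
  have : ∑ x : Fin n → Bool, ker δ x y * ind (f y) (g y)
      = (∑ x : Fin n → Bool, ker δ x y) * ind (f y) (g y) := by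
    rw [Finset.sum_mul]
  rw [this]
  have : ∑ x : Fin n → Bool, ker δ x y = 1 := by
    rw [Finset.sum_congr rfl (fun x _ => ker_symm δ x y), ker_rowsum]
  rw [this, one_mul, ind_symm]

/-- Noise-sensitivity of a tree along the kernel, bounded by path length. -/
lemma noise_le {δ : ℝ} (h0 : 0 ≤ δ) (h2 : δ ≤ 2) (T : DTree Bool n) (x : Fin n → Bool) :
    ∑ y : Fin n → Bool, ker δ x y * ind (T.eval x) (T.eval y) ≤ δ / 2 * plen T x := by
  induction T with
  | leaf b =>
    simp [DTree.eval, plen, ind]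
  | node i l r ihl ihr =>
    have hstep : ∀ y : Fin n → Bool,
        ker δ x y * ind ((DTree.node i l r).eval x) ((DTree.node i l r).eval y)
        ≤ ker δ x y * ((if y i = x i then (0:ℝ) else 1)
            + ind ((if x i then r else l).eval x) ((if x i then r else l).eval y)) := by
      intro y
      apply mul_le_mul_of_nonneg_left ?_ (ker_nonneg h0 h2 x y)
      by_cases hyx : y i = x i
      · rw [if_pos hyx, zero_add]
        have he1 : (DTree.node i l r).eval x = (if x i then r else l).eval x := by
          simp only [DTree.eval]
          cases hx : x i <;> simp [hx]
        have he2 : (DTree.node i l r).eval y = (if x i then r else l).eval y := by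
          simp only [DTree.eval, hyx]
          cases hx : x i <;> simp [hx]
        rw [he1, he2]
      · rw [if_neg hyx]
        have := ind_le_one ((DTree.node i l r).eval x) ((DTree.node i l r).eval y)
        have := ind_nonneg ((if x i then r else l).eval x) ((if x i then r else l).eval y)
        linarith
    calc ∑ y : Fin n → Bool, ker δ x y * ind ((DTree.node i l r).eval x) ((DTree.node i l r).eval y)
        ≤ ∑ y : Fin n → Bool, ker δ x y * ((if y i = x i then (0:ℝ) else 1)
            + ind ((if x i then r else l).eval x) ((if x i then r else l).eval y)) :=
          Finset.sum_le_sum (fun y _ => hstep y)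
      _ = (∑ y : Fin n → Bool, ker δ x y * (if y i = x i then (0:ℝ) else 1))
          + ∑ y : Fin n → Bool, ker δ x y * ind ((if x i then r else l).eval x) ((if x i then r else l).eval y) := by
          rw [← Finset.sum_add_distrib]
          apply Finset.sum_congr rfl
          intro y _
          ring
      _ ≤ δ / 2 + δ / 2 * plen (if x i then r else l) x := by
          have ihc : ∑ y : Fin n → Bool, ker δ x y *
              ind ((if x i then r else l).eval x) ((if x i then r else l).eval y)
              ≤ δ / 2 * plen (if x i then r else l) x := by
            cases hx : x i
            · simpa [hx] using ihl
            · simpa [hx] using ihr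
          rw [ker_flipsum]
          linarith [ihc]
      _ = δ / 2 * plen (DTree.node i l r) x := by
          have hp : (plen (DTree.node i l r) x : ℝ) = (plen (if x i then r else l) x : ℝ) + 1 := by
            cases hx : x i <;> simp [plen, hx]
          rw [hp]; ring

end S19

namespace S19
open Finset

variable {n : ℕ}

/-- Expected path length. -/
noncomputable def eplen (T : DTree Bool n) : ℝ := (∑ x : Fin n → Bool, (plen T x : ℝ)) / 2 ^ n

lemma eplen_nonneg (T : DTree Bool n) : 0 ≤ eplen T := by
  unfold eplen; positivity

lemma probNe_le_MQ {δ : ℝ} (h0 : 0 ≤ δ) (h2 : δ ≤ 2)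
    (f : (Fin n → Bool) → Bool) (T : DTree Bool n) :
    probNe T.eval f ≤ MQ δ f T + δ / 2 * eplen T := by
  rw [probNe_eq_double δ f T.eval]
  have hrhs : MQ δ f T + δ / 2 * eplen T
      = ((∑ x : Fin n → Bool, ∑ y : Fin n → Bool, ker δ x y * ind (f y) (T.eval x))
          + δ / 2 * ∑ x : Fin n → Bool, (plen T x : ℝ)) / 2 ^ n := by
    unfold MQ eplen; ring
  rw [hrhs]
  gcongr ?_ / _
  rw [Finset.mul_sum, ← Finset.sum_add_distrib]
  apply Finset.sum_le_sum
  intro x _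
  have h1 : ∑ y : Fin n → Bool, ker δ x y * ind (f y) (T.eval y)
      ≤ ∑ y : Fin n → Bool, (ker δ x y * ind (f y) (T.eval x)
          + ker δ x y * ind (T.eval x) (T.eval y)) := by
    apply Finset.sum_le_sum
    intro y _
    have h3 : ind (f y) (T.eval y) ≤ ind (f y) (T.eval x) + ind (T.eval x) (T.eval y) :=
      ind_triangle _ _ _
    have hk := ker_nonneg h0 h2 x y
    nlinarith
  rw [Finset.sum_add_distrib] at h1
  have h2' := noise_le h0 h2 T x
  linarith

lemma MQ_le_probNe {δ : ℝ} (h0 : 0 ≤ δ) (h2 : δ ≤ 2)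
    (f : (Fin n → Bool) → Bool) (T : DTree Bool n) :
    MQ δ f T ≤ probNe T.eval f + δ / 2 * eplen T := by
  rw [probNe_eq_double δ f T.eval]
  have hrhs : (∑ x : Fin n → Bool, ∑ y : Fin n → Bool, ker δ x y * ind (f y) (T.eval y)) / 2^n
        + δ / 2 * eplen T
      = ((∑ x : Fin n → Bool, ∑ y : Fin n → Bool, ker δ x y * ind (f y) (T.eval y))
          + δ / 2 * ∑ x : Fin n → Bool, (plen T x : ℝ)) / 2 ^ n := by
    unfold eplen; ring
  rw [hrhs]
  unfold MQ
  gcongr ?_ / _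
  rw [Finset.mul_sum, ← Finset.sum_add_distrib]
  apply Finset.sum_le_sum
  intro x _
  have h1 : ∑ y : Fin n → Bool, ker δ x y * ind (f y) (T.eval x)
      ≤ ∑ y : Fin n → Bool, (ker δ x y * ind (f y) (T.eval y)
          + ker δ x y * ind (T.eval x) (T.eval y)) := by
    apply Finset.sum_le_sum
    intro y _
    have h3 : ind (f y) (T.eval x) ≤ ind (f y) (T.eval y) + ind (T.eval y) (T.eval x) :=
      ind_triangle _ _ _
    rw [ind_symm (T.eval y) (T.eval x)] at h3
    have hk := ker_nonneg h0 h2 x y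
    nlinarith
  rw [Finset.sum_add_distrib] at h1
  have h2' := noise_le h0 h2 T x
  linarith

end S19

namespace S19
open Finset

variable {n : ℕ}

/-! ### Everywhere-influential trees never re-query; entropy bound -/

lemma not_queries_of_ewinfl {τ : ℝ} (hτ : 0 < τ) :
    ∀ (T : DTree Bool n) (u : (Fin n → Bool) → ℝ) (j : Fin n),
      EwInflR τ u T → UIndep j u → ¬ Queries T j := by
  intro T
  induction T with
  | leaf b => intro u j _ _ h; exact h
  | node i l r ihl ihr =>
    intro u j hEw hInd hQ
    obtain ⟨hinf, hewl, hewr⟩ := hEw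
    by_cases hij : i = j
    · subst hij
      rw [inflR_eq_zero_of_uIndep hInd] at hinf
      linarith
    · rcases hQ with h | h | h
      · exact hij h
      · exact ihl _ j hewl (uIndep_update_ne hij u false hInd) h
      · exact ihr _ j hewr (uIndep_update_ne hij u true hInd) h

lemma reqFree_of_ewinfl {τ : ℝ} (hτ : 0 < τ) :
    ∀ (T : DTree Bool n) (u : (Fin n → Bool) → ℝ), EwInflR τ u T → ReqFree T := by
  intro T
  induction T with
  | leaf b => intro u _; trivial
  | node i l r ihl ihr =>
    intro u hEw
    obtain ⟨hinf, hewl, hewr⟩ := hEw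
    refine ⟨?_, ?_, ihl _ hewl, ihr _ hewr⟩
    · exact not_queries_of_ewinfl hτ l _ i hewl (uIndep_update i u false)
    · exact not_queries_of_ewinfl hτ r _ i hewr (uIndep_update i u true)

/-- Kraft/entropy bound: expected path length of a requery-free tree is at most
`log₂(size)`. -/
lemma eplen_le_logb_size : ∀ (T : DTree Bool n), ReqFree T →
    eplen T ≤ Real.logb 2 (T.size) := by
  intro T
  induction T with
  | leaf b =>
    intro _
    simp [eplen, plen, DTree.size]
  | node i l r ihl ihr =>
    intro hRF
    obtain ⟨hql, hqr, hrfl, hrfr⟩ := hRF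
    have hsum : ∑ x : Fin n → Bool, (plen (DTree.node i l r) x : ℝ)
        = 2 ^ n + ((∑ x : Fin n → Bool, (plen l x : ℝ)) / 2
            + (∑ x : Fin n → Bool, (plen r x : ℝ)) / 2) := by
      have hpt : ∀ x : Fin n → Bool, (plen (DTree.node i l r) x : ℝ)
          = (if x i then (plen r x : ℝ) else (plen l x : ℝ)) + 1 := by
        intro x
        show ((if x i then plen r x else plen l x) + 1 : ℕ) = (_ : ℝ)
        cases hx : x i <;> simp [hx]
      rw [Finset.sum_congr rfl (fun x _ => hpt x), Finset.sum_add_distrib]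
      rw [sum_ite_pair i (fun x => (plen r x : ℝ)) (fun x => (plen l x : ℝ))
        (fun x b => by show ((plen r (Function.update x i b) : ℕ) : ℝ) = _;
                       rw [plen_update_not_queries r i hqr x b])
        (fun x b => by show ((plen l (Function.update x i b) : ℕ) : ℝ) = _;
                       rw [plen_update_not_queries l i hql x b])]
      simp [Finset.card_univ]
      ring
    have hel : eplen l ≤ Real.logb 2 (l.size) := ihl hrfl
    have her : eplen r ≤ Real.logb 2 (r.size) := ihr hrfr
    have hsz : (DTree.node i l r).size = l.size + r.size := rfl
    have ha : (1:ℝ) ≤ (l.size : ℝ) := by exact_mod_cast size_pos l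
    have hb : (1:ℝ) ≤ (r.size : ℝ) := by exact_mod_cast size_pos r
    have hAM : Real.logb 2 (l.size) + Real.logb 2 (r.size)
        ≤ 2 * (Real.logb 2 ((l.size : ℝ) + (r.size : ℝ)) - 1) := by
      have h1 : Real.logb 2 (l.size) + Real.logb 2 (r.size)
          = Real.logb 2 ((l.size : ℝ) * (r.size : ℝ)) :=
        (Real.logb_mul (by linarith) (by linarith)).symm
      have h2 : (l.size : ℝ) * (r.size : ℝ) ≤ (((l.size : ℝ) + (r.size : ℝ))/2)^2 := by
        nlinarith [sq_nonneg ((l.size : ℝ) - (r.size : ℝ))]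
      have h3 : Real.logb 2 ((l.size : ℝ) * (r.size : ℝ))
          ≤ Real.logb 2 ((((l.size : ℝ) + (r.size : ℝ))/2)^2) :=
        Real.logb_le_logb_of_le (by norm_num) (by nlinarith) h2
      have h4 : Real.logb 2 ((((l.size : ℝ) + (r.size : ℝ))/2)^2)
          = 2 * Real.logb 2 (((l.size : ℝ) + (r.size : ℝ))/2) := by
        rw [Real.logb_pow]; push_cast; ring
      have h5 : Real.logb 2 (((l.size : ℝ) + (r.size : ℝ))/2)
          = Real.logb 2 ((l.size : ℝ) + (r.size : ℝ)) - 1 := by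
        rw [Real.logb_div (by linarith) (by norm_num)]; simp
      linarith
    unfold eplen at hel her ⊢
    rw [hsum, hsz]
    have hpow : (0:ℝ) < 2 ^ n := by positivity
    rw [div_le_iff₀ hpow] at hel her ⊢
    push_cast
    calc (2:ℝ) ^ n + ((∑ x : Fin n → Bool, (plen l x : ℝ)) / 2
            + (∑ x : Fin n → Bool, (plen r x : ℝ)) / 2)
        ≤ 2 ^ n + (Real.logb 2 (l.size) * 2 ^ n / 2 + Real.logb 2 (r.size) * 2 ^ n / 2) := by
          have := hel; have := her; linarith
      _ ≤ Real.logb 2 ((l.size : ℝ) + (r.size : ℝ)) * 2 ^ n := by nlinarith [hAM, hpow]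
end S19

namespace S19
open Finset

variable {n : ℕ}

/-! ### Requery removal -/

def rmdup (ρ : Fin n → Option Bool) : DTree Bool n → DTree Bool n
  | .leaf b => .leaf b
  | .node i l r =>
    match ρ i with
    | some b => if b then rmdup ρ r else rmdup ρ l
    | none => .node i (rmdup (Function.update ρ i (some false)) l)
                      (rmdup (Function.update ρ i (some true)) r)

lemma rmdup_eval (T : DTree Bool n) : ∀ (ρ : Fin n → Option Bool) (x : Fin n → Bool),
    (∀ j b, ρ j = some b → x j = b) → (rmdup ρ T).eval x = T.eval x := by
  induction T with
  | leaf b => intro ρ x _; rfl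
  | node i l r ihl ihr =>
    intro ρ x hx
    show (match ρ i with
      | some b => if b then rmdup ρ r else rmdup ρ l
      | none => DTree.node i (rmdup (Function.update ρ i (some false)) l)
          (rmdup (Function.update ρ i (some true)) r)).eval x
      = (if x i then r.eval x else l.eval x)
    cases hρ : ρ i with
    | some b =>
      have hxi : x i = b := hx i b hρ
      cases b
      · simp only [if_false, Bool.false_eq_true]
        rw [hxi, ihl ρ x hx]
        simp
      · simp only [if_true]
        rw [hxi, ihr ρ x hx]
        simp
    | none =>
      show (if x i then (rmdup (Function.update ρ i (some true)) r).eval x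
          else (rmdup (Function.update ρ i (some false)) l).eval x) = _
      cases hxi : x i
      · simp only [Bool.false_eq_true, if_false]
        apply ihl
        intro j b hj
        by_cases hji : j = i
        · subst hji
          rw [Function.update_self] at hj
          cases hj; exact hxi
        · rw [Function.update_of_ne hji] at hj
          exact hx j b hj
      · simp only [if_true]
        apply ihr
        intro j b hj
        by_cases hji : j = i
        · subst hji
          rw [Function.update_self] at hj
          cases hj; exact hxi
        · rw [Function.update_of_ne hji] at hj
          exact hx j b hj

lemma rmdup_not_queries (T : DTree Bool n) : ∀ (ρ : Fin n → Option Bool) (j : Fin n) (b : Bool),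
    ρ j = some b → ¬ Queries (rmdup ρ T) j := by
  induction T with
  | leaf c => intro ρ j b _ h; exact h
  | node i l r ihl ihr =>
    intro ρ j b hρ
    show ¬ Queries (match ρ i with
      | some c => if c then rmdup ρ r else rmdup ρ l
      | none => DTree.node i (rmdup (Function.update ρ i (some false)) l)
          (rmdup (Function.update ρ i (some true)) r)) j
    cases hρi : ρ i with
    | some c =>
      cases c
      · simpa using ihl ρ j b hρ
      · simpa using ihr ρ j b hρ
    | none =>
      intro hQ
      have hij : i ≠ j := by
        intro h; subst h; rw [hρi] at hρ; cases hρ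
      rcases hQ with h | h | h
      · exact hij h
      · exact ihl _ j b (by rw [Function.update_of_ne (Ne.symm hij), hρ]) h
      · exact ihr _ j b (by rw [Function.update_of_ne (Ne.symm hij), hρ]) h

lemma rmdup_reqFree (T : DTree Bool n) : ∀ ρ : Fin n → Option Bool, ReqFree (rmdup ρ T) := by
  induction T with
  | leaf b => intro ρ; trivial
  | node i l r ihl ihr =>
    intro ρ
    show ReqFree (match ρ i with
      | some c => if c then rmdup ρ r else rmdup ρ l
      | none => DTree.node i (rmdup (Function.update ρ i (some false)) l)
          (rmdup (Function.update ρ i (some true)) r))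
    cases hρi : ρ i with
    | some c =>
      cases c
      · simpa using ihl ρ
      · simpa using ihr ρ
    | none =>
      refine ⟨?_, ?_, ihl _, ihr _⟩
      · exact rmdup_not_queries l _ i false (Function.update_self i (some false) ρ)
      · exact rmdup_not_queries r _ i true (Function.update_self i (some true) ρ)

lemma rmdup_size (T : DTree Bool n) : ∀ ρ : Fin n → Option Bool, (rmdup ρ T).size ≤ T.size := by
  induction T with
  | leaf b => intro ρ; exact le_refl 1
  | node i l r ihl ihr =>
    intro ρ
    show (match ρ i with
      | some c => if c then rmdup ρ r else rmdup ρ l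
      | none => DTree.node i (rmdup (Function.update ρ i (some false)) l)
          (rmdup (Function.update ρ i (some true)) r)).size ≤ l.size + r.size
    cases hρi : ρ i with
    | some c =>
      cases c
      · simpa using le_trans (ihl ρ) (by omega)
      · simpa using le_trans (ihr ρ) (by omega)
    | none =>
      show (rmdup (Function.update ρ i (some false)) l).size
          + (rmdup (Function.update ρ i (some true)) r).size ≤ l.size + r.size
      have := ihl (Function.update ρ i (some false))
      have := ihr (Function.update ρ i (some true))
      omega

lemma rmdup_depth (T : DTree Bool n) : ∀ ρ : Fin n → Option Bool, (rmdup ρ T).depth ≤ T.depth := by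
  induction T with
  | leaf b => intro ρ; exact le_refl 0
  | node i l r ihl ihr =>
    intro ρ
    show (match ρ i with
      | some c => if c then rmdup ρ r else rmdup ρ l
      | none => DTree.node i (rmdup (Function.update ρ i (some false)) l)
          (rmdup (Function.update ρ i (some true)) r)).depth ≤ max l.depth r.depth + 1
    cases hρi : ρ i with
    | some c =>
      cases c
      · simpa using le_trans (ihl ρ) (by omega)
      · simpa using le_trans (ihr ρ) (by omega)
    | none =>
      show max (rmdup (Function.update ρ i (some false)) l).depth
          (rmdup (Function.update ρ i (some true)) r).depth + 1 ≤ max l.depth r.depth + 1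
      have := ihl (Function.update ρ i (some false))
      have := ihr (Function.update ρ i (some true))
      omega

end S19

namespace S19
open Finset

variable {n : ℕ}

/-! ### A general splitting identity for distR -/

lemma distR_ite_split (i : Fin n) (P Q P' Q' : (Fin n → Bool) → ℝ)
    (hP : UIndep i P) (hQ : UIndep i Q) (hP' : UIndep i P') (hQ' : UIndep i Q') :
    distR (fun x => if x i then P x else Q x) (fun x => if x i then P' x else Q' x)
      = distR P P' / 2 + distR Q Q' / 2 := by
  unfold distR
  have hpt : ∀ x : Fin n → Bool,
      |(if x i then P x else Q x) - (if x i then P' x else Q' x)|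
      = if x i then |P x - P' x| else |Q x - Q' x| := by
    intro x; cases hx : x i <;> simp [hx]
  rw [Finset.sum_congr rfl (fun x _ => hpt x)]
  rw [sum_ite_pair i (fun x => |P x - P' x|) (fun x => |Q x - Q' x|)
    (fun x b => by show |P (Function.update x i b) - P' (Function.update x i b)| = |P x - P' x|
                   rw [hP x b, hP' x b])
    (fun x b => by show |Q (Function.update x i b) - Q' (Function.update x i b)| = |Q x - Q' x|
                   rw [hQ x b, hQ' x b])]
  ring

lemma uIndep_bval_eval {i : Fin n} {T : DTree Bool n} (h : ¬ Queries T i) :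
    UIndep i (fun x => bval (T.eval x)) := by
  intro x b
  simp only
  rw [eval_update_not_queries T i h x b]

/-- rewrite an arbitrary function as an ite over coordinate i -/
lemma fun_eq_ite (i : Fin n) (g : (Fin n → Bool) → ℝ) :
    g = fun x => if x i then g (Function.update x i true) else g (Function.update x i false) := by
  funext x
  cases hx : x i
  · have : Function.update x i false = x := by rw [← hx]; exact Function.update_eq_self i x
    simp [hx, this]
  · have : Function.update x i true = x := by rw [← hx]; exact Function.update_eq_self i x
    simp [hx, this]

lemma bval_node_eq_ite (i : Fin n) (l r : DTree Bool n) :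
    (fun x => bval ((DTree.node i l r).eval x))
      = fun x => if x i then bval (r.eval x) else bval (l.eval x) := by
  funext x
  show bval (if x i then r.eval x else l.eval x) = _
  cases hx : x i <;> simp [hx]

/-! ### Truncation -/

def headb : DTree Bool n → Bool
  | .leaf b => b
  | .node _ l _ => headb l

def trunc : ℕ → DTree Bool n → DTree Bool n
  | 0, t => .leaf (headb t)
  | _+1, .leaf b => .leaf b
  | k+1, .node i l r => .node i (trunc k l) (trunc k r)

lemma trunc_size : ∀ (k : ℕ) (T : DTree Bool n), (trunc k T).size ≤ T.size := by
  intro k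
  induction k with
  | zero => intro T; exact size_pos T
  | succ k ih =>
    intro T
    cases T with
    | leaf b => exact le_refl 1
    | node i l r =>
      show (trunc k l).size + (trunc k r).size ≤ l.size + r.size
      have := ih l; have := ih r; omega

lemma trunc_depth : ∀ (k : ℕ) (T : DTree Bool n), (trunc k T).depth ≤ k := by
  intro k
  induction k with
  | zero => intro T; exact le_refl 0
  | succ k ih =>
    intro T
    cases T with
    | leaf b => exact Nat.zero_le _
    | node i l r =>
      show max (trunc k l).depth (trunc k r).depth + 1 ≤ k + 1
      have := ih l; have := ih r; omega

lemma trunc_queries : ∀ (k : ℕ) (T : DTree Bool n) (j : Fin n),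
    Queries (trunc k T) j → Queries T j := by
  intro k
  induction k with
  | zero => intro T j h; exact absurd h (by intro h; exact h)
  | succ k ih =>
    intro T j h
    cases T with
    | leaf b => exact h
    | node i l r =>
      rcases h with h | h | h
      · exact Or.inl h
      · exact Or.inr (Or.inl (ih l j h))
      · exact Or.inr (Or.inr (ih r j h))

lemma trunc_reqFree : ∀ (k : ℕ) (T : DTree Bool n), ReqFree T → ReqFree (trunc k T) := by
  intro k
  induction k with
  | zero => intro T _; trivial
  | succ k ih =>
    intro T hRF
    cases T with
    | leaf b => trivial
    | node i l r =>
      obtain ⟨hql, hqr, hrfl, hrfr⟩ := hRF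
      exact ⟨fun h => hql (trunc_queries k l i h), fun h => hqr (trunc_queries k r i h),
        ih l hrfl, ih r hrfr⟩

lemma trunc_err : ∀ (k : ℕ) (T : DTree Bool n), ReqFree T →
    distR (fun x => bval ((trunc k T).eval x)) (fun x => bval (T.eval x))
      ≤ 2 * T.size / 2 ^ k := by
  intro k
  induction k with
  | zero =>
    intro T _
    have h1 := distR_le_two (trunc 0 T).eval T.eval
    have h2 : (1:ℝ) ≤ (T.size : ℝ) := by exact_mod_cast size_pos T
    calc distR (fun x => bval ((trunc 0 T).eval x)) (fun x => bval (T.eval x)) ≤ 2 := h1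
      _ ≤ 2 * T.size / 2 ^ 0 := by
          rw [pow_zero, div_one]
          linarith
  | succ k ih =>
    intro T hRF
    cases T with
    | leaf b =>
      have : distR (fun x => bval ((trunc (k+1) (DTree.leaf b)).eval x))
          (fun x => bval ((DTree.leaf b : DTree Bool n).eval x)) = 0 := by
        show distR (fun x => bval b) (fun x => bval b) = 0
        unfold distR
        simp
      rw [this]
      positivity
    | node i l r =>
      obtain ⟨hql, hqr, hrfl, hrfr⟩ := hRF
      have hsplit : distR (fun x => bval ((trunc (k+1) (DTree.node i l r)).eval x))
          (fun x => bval ((DTree.node i l r).eval x))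
          = distR (fun x => bval ((trunc k r).eval x)) (fun x => bval (r.eval x)) / 2
            + distR (fun x => bval ((trunc k l).eval x)) (fun x => bval (l.eval x)) / 2 := by
        have e1 : (fun x => bval ((trunc (k+1) (DTree.node i l r)).eval x))
            = fun x => if x i then bval ((trunc k r).eval x) else bval ((trunc k l).eval x) :=
          bval_node_eq_ite i (trunc k l) (trunc k r)
        have e2 : (fun x => bval ((DTree.node i l r).eval x))
            = fun x => if x i then bval (r.eval x) else bval (l.eval x) :=
          bval_node_eq_ite i l r
        rw [e1, e2]
        exact distR_ite_split i _ _ _ _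
          (uIndep_bval_eval (fun h => hqr (trunc_queries k r i h)))
          (uIndep_bval_eval (fun h => hql (trunc_queries k l i h)))
          (uIndep_bval_eval hqr) (uIndep_bval_eval hql)
      rw [hsplit]
      have h1 := ih l hrfl
      have h2 := ih r hrfr
      have hsz : ((DTree.node i l r).size : ℝ) = (l.size : ℝ) + (r.size : ℝ) := by
        show ((l.size + r.size : ℕ) : ℝ) = _
        push_cast; ring
      rw [hsz]
      have hp : (0:ℝ) < 2 ^ k := by positivity
      have hpow : (2:ℝ) ^ (k+1) = 2 * 2 ^ k := by ring
      rw [hpow]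
      calc distR (fun x => bval ((trunc k r).eval x)) (fun x => bval (r.eval x)) / 2
            + distR (fun x => bval ((trunc k l).eval x)) (fun x => bval (l.eval x)) / 2
          ≤ (2 * (r.size:ℝ) / 2 ^ k) / 2 + (2 * (l.size:ℝ) / 2 ^ k) / 2 := by linarith
        _ = 2 * ((l.size:ℝ) + (r.size:ℝ)) / (2 * 2 ^ k) := by
            field_simp
            ring

end S19

namespace S19
open Finset

variable {n : ℕ}

/-! ### distance to a one-coordinate restriction equals influence -/

lemma distR_update (g : (Fin n → Bool) → ℝ) (i : Fin n) (b : Bool) :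
    distR g (fun x => g (Function.update x i b)) = inflR g i := by
  set H : (Fin n → Bool) → ℝ :=
    fun x => |g (Function.update x i true) - g (Function.update x i false)| with hH
  have hHind : ∀ x c, H (Function.update x i c) = H x := by
    intro x c
    simp only [hH, Function.update_idem]
  have hupT : ∀ x : Fin n → Bool, x i = true → Function.update x i true = x := by
    intro x hx; rw [← hx]; exact Function.update_eq_self i x
  have hupF : ∀ x : Fin n → Bool, x i = false → Function.update x i false = x := by
    intro x hx; rw [← hx]; exact Function.update_eq_self i x
  have hinfl : inflR g i = ((∑ x : Fin n → Bool, H x) / 2) / 2 ^ n := by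
    unfold inflR
    congr 1
    have hpt : ∀ x : Fin n → Bool,
        (|g x - g (Function.update x i true)| + |g x - g (Function.update x i false)|) / 2
          = H x / 2 := by
      intro x
      cases hx : x i
      · rw [hupF x hx]
        simp only [sub_self, abs_zero, add_zero, hH]
        rw [abs_sub_comm]
        congr 2
        rw [hupF x hx]
      · rw [hupT x hx]
        simp only [sub_self, abs_zero, zero_add, hH]
        congr 2
        rw [hupT x hx]
    rw [Finset.sum_congr rfl (fun x _ => hpt x), ← Finset.sum_div]
  cases b
  · unfold distR
    have hpt : ∀ x : Fin n → Bool,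
        |g x - g (Function.update x i false)| = if x i then H x else 0 := by
      intro x
      cases hx : x i
      · rw [hupF x hx]
        simp [hx]
      · simp only [hx, if_true, hH]
        congr 2
        rw [hupT x hx]
    rw [Finset.sum_congr rfl (fun x _ => hpt x), sum_ite_half i H hHind, hinfl]
  · unfold distR
    have hpt : ∀ x : Fin n → Bool,
        |g x - g (Function.update x i true)| = if x i then 0 else H x := by
      intro x
      cases hx : x i
      · simp only [hx, Bool.false_eq_true, if_false, hH]
        rw [abs_sub_comm]
        congr 2
        rw [hupF x hx]
      · rw [hupT x hx]
        simp [hx]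
    rw [Finset.sum_congr rfl (fun x _ => hpt x), sum_ite_half' i H hHind, hinfl]

/-! ### logb helpers -/

lemma logb_AMGM (a b : ℕ) (ha : 1 ≤ a) (hb : 1 ≤ b) :
    Real.logb 2 (a : ℝ) + Real.logb 2 (b : ℝ) ≤ 2 * (Real.logb 2 ((a : ℝ) + (b : ℝ)) - 1) := by
  have ha' : (1:ℝ) ≤ (a : ℝ) := by exact_mod_cast ha
  have hb' : (1:ℝ) ≤ (b : ℝ) := by exact_mod_cast hb
  have h1 : Real.logb 2 (a:ℝ) + Real.logb 2 (b:ℝ) = Real.logb 2 ((a:ℝ) * (b:ℝ)) :=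
    (Real.logb_mul (by linarith) (by linarith)).symm
  have h2 : (a:ℝ) * (b:ℝ) ≤ (((a:ℝ) + (b:ℝ))/2)^2 := by
    nlinarith [sq_nonneg ((a:ℝ) - (b:ℝ))]
  have h3 : Real.logb 2 ((a:ℝ) * (b:ℝ)) ≤ Real.logb 2 ((((a:ℝ) + (b:ℝ))/2)^2) :=
    Real.logb_le_logb_of_le (by norm_num) (by nlinarith) h2
  have h4 : Real.logb 2 ((((a:ℝ) + (b:ℝ))/2)^2) = 2 * Real.logb 2 (((a:ℝ) + (b:ℝ))/2) := by
    rw [Real.logb_pow]; push_cast; ring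
  have h5 : Real.logb 2 (((a:ℝ) + (b:ℝ))/2) = Real.logb 2 ((a:ℝ) + (b:ℝ)) - 1 := by
    rw [Real.logb_div (by linarith) (by norm_num)]; simp
  linarith

lemma logb_le_of_double (a s : ℕ) (ha : 1 ≤ a) (h : 2 * a ≤ s) :
    Real.logb 2 (a : ℝ) ≤ Real.logb 2 (s : ℝ) - 1 := by
  have ha' : (1:ℝ) ≤ (a : ℝ) := by exact_mod_cast ha
  have h' : 2 * (a:ℝ) ≤ (s:ℝ) := by exact_mod_cast h
  have h1 : Real.logb 2 (2 * (a:ℝ)) = 1 + Real.logb 2 (a:ℝ) := by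
    rw [Real.logb_mul (by norm_num) (by linarith)]
    simp
  have h2 : Real.logb 2 (2 * (a:ℝ)) ≤ Real.logb 2 (s:ℝ) :=
    Real.logb_le_logb_of_le (by norm_num) (by linarith) h'
  linarith

lemma logb_mono_size (a s : ℕ) (ha : 1 ≤ a) (h : a ≤ s) :
    Real.logb 2 (a : ℝ) ≤ Real.logb 2 (s : ℝ) := by
  have ha' : (1:ℝ) ≤ (a : ℝ) := by exact_mod_cast ha
  exact Real.logb_le_logb_of_le (by norm_num) (by linarith) (by exact_mod_cast h)

lemma logb_size_nonneg (a : ℕ) (ha : 1 ≤ a) : 0 ≤ Real.logb 2 (a : ℝ) := by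
  apply Real.logb_nonneg (by norm_num)
  exact_mod_cast ha

end S19

namespace S19
open Finset

variable {n : ℕ}

/-! ### Pruning -/

noncomputable def prune (τ : ℝ) : ((Fin n → Bool) → ℝ) → DTree Bool n → DTree Bool n
  | _, .leaf b => .leaf b
  | g, .node i l r =>
    if τ ≤ inflR g i then
      .node i (prune τ (fun x => g (Function.update x i false)) l)
              (prune τ (fun x => g (Function.update x i true)) r)
    else if l.size ≤ r.size then
      (if distR (fun x => bval (l.eval x)) (fun x => g (Function.update x i false))
          ≤ distR (fun x => bval (r.eval x)) (fun x => g (Function.update x i true)) + 2*τ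
       then prune τ g l else prune τ g r)
    else
      (if distR (fun x => bval (r.eval x)) (fun x => g (Function.update x i true))
          ≤ distR (fun x => bval (l.eval x)) (fun x => g (Function.update x i false)) + 2*τ
       then prune τ g r else prune τ g l)

lemma prune_node_eq (τ : ℝ) (g : (Fin n → Bool) → ℝ) (i : Fin n) (l r : DTree Bool n) :
    prune τ g (DTree.node i l r) =
    if τ ≤ inflR g i then
      DTree.node i (prune τ (fun x => g (Function.update x i false)) l)
              (prune τ (fun x => g (Function.update x i true)) r)
    else if l.size ≤ r.size then
      (if distR (fun x => bval (l.eval x)) (fun x => g (Function.update x i false))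
          ≤ distR (fun x => bval (r.eval x)) (fun x => g (Function.update x i true)) + 2*τ
       then prune τ g l else prune τ g r)
    else
      (if distR (fun x => bval (r.eval x)) (fun x => g (Function.update x i true))
          ≤ distR (fun x => bval (l.eval x)) (fun x => g (Function.update x i false)) + 2*τ
       then prune τ g r else prune τ g l) := rfl

lemma prune_size (τ : ℝ) : ∀ (T : DTree Bool n) (g : (Fin n → Bool) → ℝ),
    (prune τ g T).size ≤ T.size := by
  intro T
  induction T with
  | leaf b => intro g; exact le_refl 1
  | node i l r ihl ihr =>
    intro g
    rw [prune_node_eq]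
    split_ifs with h1 h2 h3 h4
    · show (prune τ _ l).size + (prune τ _ r).size ≤ l.size + r.size
      have := ihl (fun x => g (Function.update x i false))
      have := ihr (fun x => g (Function.update x i true))
      omega
    · have := ihl g; show (prune τ g l).size ≤ l.size + r.size
      have := size_pos r; omega
    · have := ihr g; show (prune τ g r).size ≤ l.size + r.size
      have := size_pos l; omega
    · have := ihr g; show (prune τ g r).size ≤ l.size + r.size
      have := size_pos l; omega
    · have := ihl g; show (prune τ g l).size ≤ l.size + r.size
      have := size_pos r; omega

lemma prune_depth (τ : ℝ) : ∀ (T : DTree Bool n) (g : (Fin n → Bool) → ℝ),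
    (prune τ g T).depth ≤ T.depth := by
  intro T
  induction T with
  | leaf b => intro g; exact le_refl 0
  | node i l r ihl ihr =>
    intro g
    rw [prune_node_eq]
    split_ifs with h1 h2 h3 h4
    · show max (prune τ _ l).depth (prune τ _ r).depth + 1 ≤ max l.depth r.depth + 1
      have := ihl (fun x => g (Function.update x i false))
      have := ihr (fun x => g (Function.update x i true))
      omega
    · exact le_trans (ihl g) (by show l.depth ≤ max l.depth r.depth + 1; omega)
    · exact le_trans (ihr g) (by show r.depth ≤ max l.depth r.depth + 1; omega)
    · exact le_trans (ihr g) (by show r.depth ≤ max l.depth r.depth + 1; omega)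
    · exact le_trans (ihl g) (by show l.depth ≤ max l.depth r.depth + 1; omega)

lemma prune_queries (τ : ℝ) : ∀ (T : DTree Bool n) (g : (Fin n → Bool) → ℝ) (j : Fin n),
    Queries (prune τ g T) j → Queries T j := by
  intro T
  induction T with
  | leaf b => intro g j h; exact h
  | node i l r ihl ihr =>
    intro g j
    rw [prune_node_eq]
    split_ifs with h1 h2 h3 h4 <;> intro hQ
    · rcases hQ with h | h | h
      · exact Or.inl h
      · exact Or.inr (Or.inl (ihl _ j h))
      · exact Or.inr (Or.inr (ihr _ j h))
    · exact Or.inr (Or.inl (ihl g j hQ))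
    · exact Or.inr (Or.inr (ihr g j hQ))
    · exact Or.inr (Or.inr (ihr g j hQ))
    · exact Or.inr (Or.inl (ihl g j hQ))

lemma prune_ewinfl (τ : ℝ) : ∀ (T : DTree Bool n) (g : (Fin n → Bool) → ℝ),
    EwInflR τ g (prune τ g T) := by
  intro T
  induction T with
  | leaf b => intro g; trivial
  | node i l r ihl ihr =>
    intro g
    rw [prune_node_eq]
    split_ifs with h1 h2 h3 h4
    · exact ⟨h1, ihl _, ihr _⟩
    · exact ihl g
    · exact ihr g
    · exact ihr g
    · exact ihl g

end S19

namespace S19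
open Finset

variable {n : ℕ}

lemma node_split_dist (g : (Fin n → Bool) → ℝ) (i : Fin n) (l' r' : DTree Bool n)
    (hl' : ¬ Queries l' i) (hr' : ¬ Queries r' i) :
    distR (fun x => bval ((DTree.node i l' r').eval x)) g
    = distR (fun x => bval (r'.eval x)) (fun x => g (Function.update x i true)) / 2
      + distR (fun x => bval (l'.eval x)) (fun x => g (Function.update x i false)) / 2 := by
  conv_lhs => rw [bval_node_eq_ite i l' r', fun_eq_ite i g]
  exact distR_ite_split i _ _ _ _ (uIndep_bval_eval hr') (uIndep_bval_eval hl')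
    (uIndep_update i g true) (uIndep_update i g false)

/-- The pruning cost lemma: pruning costs at most `2τ·log₂(size)`. -/
lemma prune_dist (τ : ℝ) (hτ : 0 ≤ τ) : ∀ (T : DTree Bool n) (g : (Fin n → Bool) → ℝ),
    ReqFree T →
    distR (fun x => bval ((prune τ g T).eval x)) g
      ≤ distR (fun x => bval (T.eval x)) g + 2 * τ * Real.logb 2 (T.size : ℝ) := by
  intro T
  induction T with
  | leaf b =>
    intro g _
    have h0 : Real.logb 2 (((DTree.leaf b : DTree Bool n).size : ℕ) : ℝ) = 0 := by
      show Real.logb 2 ((1:ℕ) : ℝ) = 0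
      simp
    rw [h0, mul_zero, add_zero]
    exact le_refl _
  | node i l r ihl ihr =>
    intro g hRF
    obtain ⟨hql, hqr, hrfl, hrfr⟩ := hRF
    have hsplitT := node_split_dist g i l r hql hqr
    have hszn : (DTree.node i l r).size = l.size + r.size := rfl
    have hL1 : (1:ℕ) ≤ l.size := size_pos l
    have hR1 : (1:ℕ) ≤ r.size := size_pos r
    have hcast : (((DTree.node i l r).size : ℕ) : ℝ) = (l.size : ℝ) + (r.size : ℝ) := by
      rw [hszn]; push_cast; ring
    rw [prune_node_eq]
    split_ifs with h1 h2 h3 h4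
    -- kept node
    · have hsplitP := node_split_dist g i
        (prune τ (fun x => g (Function.update x i false)) l)
        (prune τ (fun x => g (Function.update x i true)) r)
        (fun h => hql (prune_queries τ l _ i h))
        (fun h => hqr (prune_queries τ r _ i h))
      rw [hsplitP, hsplitT, hcast]
      have hl := ihl (fun x => g (Function.update x i false)) hrfl
      have hr := ihr (fun x => g (Function.update x i true)) hrfr
      have hAM := logb_AMGM l.size r.size hL1 hR1
      have hAM' : 2*τ * (Real.logb 2 (l.size:ℝ) + Real.logb 2 (r.size:ℝ))
          ≤ 2*τ * (2 * (Real.logb 2 ((l.size:ℝ) + (r.size:ℝ)) - 1)) :=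
        mul_le_mul_of_nonneg_left hAM (by linarith)
      linarith
    -- promote left child (smaller, and good enough)
    · rw [hsplitT, hcast]
      have ih := ihl g hrfl
      have htri : distR (fun x => bval (l.eval x)) g
          ≤ distR (fun x => bval (l.eval x)) (fun x => g (Function.update x i false))
            + inflR g i := by
        calc distR (fun x => bval (l.eval x)) g
            ≤ distR (fun x => bval (l.eval x)) (fun x => g (Function.update x i false))
              + distR (fun x => g (Function.update x i false)) g := distR_triangle _ _ _
          _ = _ + inflR g i := by rw [distR_symm _ g, distR_update g i false]
      have hinf : inflR g i ≤ τ := le_of_lt (not_le.mp h1)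
      have hlog : Real.logb 2 (l.size:ℝ) ≤ Real.logb 2 (((DTree.node i l r).size : ℕ):ℝ) - 1 :=
        logb_le_of_double l.size _ hL1 (by rw [hszn]; omega)
      rw [hcast] at hlog
      have hlog' : 2*τ * Real.logb 2 (l.size:ℝ)
          ≤ 2*τ * (Real.logb 2 ((l.size:ℝ) + (r.size:ℝ)) - 1) :=
        mul_le_mul_of_nonneg_left hlog (by linarith)
      linarith
    -- left smaller but right is strictly better: promote right
    · rw [hsplitT, hcast]
      have ih := ihr g hrfr
      have htri : distR (fun x => bval (r.eval x)) g
          ≤ distR (fun x => bval (r.eval x)) (fun x => g (Function.update x i true))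
            + inflR g i := by
        calc distR (fun x => bval (r.eval x)) g
            ≤ distR (fun x => bval (r.eval x)) (fun x => g (Function.update x i true))
              + distR (fun x => g (Function.update x i true)) g := distR_triangle _ _ _
          _ = _ + inflR g i := by rw [distR_symm _ g, distR_update g i true]
      have hinf : inflR g i ≤ τ := le_of_lt (not_le.mp h1)
      have hlog : Real.logb 2 (r.size:ℝ) ≤ Real.logb 2 (((DTree.node i l r).size : ℕ):ℝ) :=
        logb_mono_size r.size _ hR1 (by rw [hszn]; omega)
      rw [hcast] at hlog
      have hlog' : 2*τ * Real.logb 2 (r.size:ℝ)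
          ≤ 2*τ * Real.logb 2 ((l.size:ℝ) + (r.size:ℝ)) :=
        mul_le_mul_of_nonneg_left hlog (by linarith)
      push_neg at h3
      linarith
    -- promote right child (smaller, and good enough)
    · rw [hsplitT, hcast]
      have ih := ihr g hrfr
      have htri : distR (fun x => bval (r.eval x)) g
          ≤ distR (fun x => bval (r.eval x)) (fun x => g (Function.update x i true))
            + inflR g i := by
        calc distR (fun x => bval (r.eval x)) g
            ≤ distR (fun x => bval (r.eval x)) (fun x => g (Function.update x i true))
              + distR (fun x => g (Function.update x i true)) g := distR_triangle _ _ _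
          _ = _ + inflR g i := by rw [distR_symm _ g, distR_update g i true]
      have hinf : inflR g i ≤ τ := le_of_lt (not_le.mp h1)
      have hlog : Real.logb 2 (r.size:ℝ) ≤ Real.logb 2 (((DTree.node i l r).size : ℕ):ℝ) - 1 :=
        logb_le_of_double r.size _ hR1 (by rw [hszn]; omega)
      rw [hcast] at hlog
      have hlog' : 2*τ * Real.logb 2 (r.size:ℝ)
          ≤ 2*τ * (Real.logb 2 ((l.size:ℝ) + (r.size:ℝ)) - 1) :=
        mul_le_mul_of_nonneg_left hlog (by linarith)
      linarith
    -- right smaller but left strictly better: promote left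
    · rw [hsplitT, hcast]
      have ih := ihl g hrfl
      have htri : distR (fun x => bval (l.eval x)) g
          ≤ distR (fun x => bval (l.eval x)) (fun x => g (Function.update x i false))
            + inflR g i := by
        calc distR (fun x => bval (l.eval x)) g
            ≤ distR (fun x => bval (l.eval x)) (fun x => g (Function.update x i false))
              + distR (fun x => g (Function.update x i false)) g := distR_triangle _ _ _
          _ = _ + inflR g i := by rw [distR_symm _ g, distR_update g i false]
      have hinf : inflR g i ≤ τ := le_of_lt (not_le.mp h1)
      have hlog : Real.logb 2 (l.size:ℝ) ≤ Real.logb 2 (((DTree.node i l r).size : ℕ):ℝ) :=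
        logb_mono_size l.size _ hL1 (by rw [hszn]; omega)
      rw [hcast] at hlog
      have hlog' : 2*τ * Real.logb 2 (l.size:ℝ)
          ≤ 2*τ * Real.logb 2 ((l.size:ℝ) + (r.size:ℝ)) :=
        mul_le_mul_of_nonneg_left hlog (by linarith)
      push_neg at h4
      linarith

end S19

namespace S19
open Finset

variable {n : ℕ}

lemma probNe_symm (a b : (Fin n → Bool) → Bool) : probNe a b = probNe b a := by
  rw [probNe_eq_half_distR, probNe_eq_half_distR, distR_symm]

lemma probNe_congr_left (a a' b : (Fin n → Bool) → Bool) (h : ∀ x, a x = a' x) :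
    probNe a b = probNe a' b := by
  unfold probNe
  congr 1
  exact Finset.sum_congr rfl (fun x _ => by rw [h x])

lemma probNe_triangle (a b c : (Fin n → Bool) → Bool) :
    probNe a c ≤ probNe a b + probNe b c := by
  rw [probNe_eq_half_distR, probNe_eq_half_distR, probNe_eq_half_distR]
  have := distR_triangle (fun x => bval (a x)) (fun x => bval (b x)) (fun x => bval (c x))
  linarith

set_option maxHeartbeats 2000000 in
/-- The main quantitative bound, for any minimizing tree. -/
lemma main_bound {n : ℕ} (f : (Fin n → Bool) → Bool) (s : ℕ) (hs : 2 ≤ s)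
    (ε : ℝ) (hε0 : 0 < ε) (hε1 : ε < 1) (opt : ℝ)
    (Tstar : DTree Bool n) (hTstarSize : Tstar.size = s)
    (hopt : probNe f Tstar.eval ≤ opt)
    (τ : ℝ) (hτ : τ = ε / Real.logb 2 s)
    (d : ℕ) (hd : d = ⌈Real.logb 2 (s / ε)⌉₊)
    (δ : ℝ) (hδ0 : 0 ≤ δ) (hδ : δ ≤ ε / Real.logb 2 s) :
    ∀ T : DTree Bool n, T.size ≤ s → T.depth ≤ d →
        EwInflR τ (smooth δ fun x => bval (f x)) T →
        (∀ T' : DTree Bool n, T'.size ≤ s → T'.depth ≤ d →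
            EwInflR τ (smooth δ fun x => bval (f x)) T' →
            distR (fun x => bval (T.eval x)) (smooth δ fun x => bval (f x))
              ≤ distR (fun x => bval (T'.eval x)) (smooth δ fun x => bval (f x))) →
        probNe T.eval f ≤ opt + 4 * ε := by
  intro T hTsz hTd hTew hTmin
  set G : (Fin n → Bool) → ℝ := smooth δ (fun x => bval (f x)) with hG
  -- numeric facts
  have hL1 : (1:ℝ) ≤ Real.logb 2 (s:ℝ) := by
    rw [show (1:ℝ) = Real.logb 2 2 by simp]
    exact Real.logb_le_logb_of_le (by norm_num) (by norm_num) (by exact_mod_cast hs)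
  have hLpos : (0:ℝ) < Real.logb 2 (s:ℝ) := by linarith
  have hτpos : 0 < τ := by rw [hτ]; exact div_pos hε0 hLpos
  have hτL : τ * Real.logb 2 (s:ℝ) = ε := by
    rw [hτ]; field_simp
  have hδL : δ * Real.logb 2 (s:ℝ) ≤ ε := by
    calc δ * Real.logb 2 (s:ℝ) ≤ (ε / Real.logb 2 (s:ℝ)) * Real.logb 2 (s:ℝ) :=
          mul_le_mul_of_nonneg_right hδ (le_of_lt hLpos)
      _ = ε := by field_simp
  have hδ2 : δ ≤ 2 := by
    have : ε / Real.logb 2 (s:ℝ) ≤ ε := div_le_self (le_of_lt hε0) hL1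
    linarith
  have hsd : (s:ℝ) ≤ ε * 2 ^ d := by
    have hz : (0:ℝ) < (s:ℝ) / ε := by
      apply div_pos _ hε0
      have : (0:ℕ) < s := by omega
      exact_mod_cast this
    have hle : Real.logb 2 ((s:ℝ) / ε) ≤ (d:ℝ) := by
      rw [hd]
      exact_mod_cast Nat.le_ceil (Real.logb 2 ((s:ℝ)/ε))
    have h2d : (s:ℝ)/ε ≤ 2 ^ d := by
      have := Real.rpow_logb (by norm_num : (0:ℝ) < 2) (by norm_num) hz
      calc (s:ℝ)/ε = (2:ℝ) ^ (Real.logb 2 ((s:ℝ)/ε)) := this.symm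
        _ ≤ (2:ℝ) ^ (d:ℝ) := Real.rpow_le_rpow_of_exponent_le (by norm_num) hle
        _ = 2 ^ d := by rw [Real.rpow_natCast]
    rw [div_le_iff₀ hε0] at h2d
    linarith [h2d]
  -- the competitor chain
  have hτnonneg : (0:ℝ) ≤ τ := le_of_lt hτpos
  set T1 := rmdup (fun _ => none) Tstar with hT1
  have hT1eval : ∀ x, T1.eval x = Tstar.eval x := by
    intro x
    exact rmdup_eval Tstar (fun _ => none) x (fun j b h => by cases h)
  have hT1rf : ReqFree T1 := rmdup_reqFree Tstar _
  have hT1sz : T1.size ≤ s := by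
    rw [← hTstarSize]; exact rmdup_size Tstar _
  set T2 := trunc d T1 with hT2
  have hT2rf : ReqFree T2 := trunc_reqFree d T1 hT1rf
  have hT2sz : T2.size ≤ s := le_trans (trunc_size d T1) hT1sz
  have hT2d : T2.depth ≤ d := trunc_depth d T1
  have herr2 : distR (fun x => bval (T2.eval x)) (fun x => bval (T1.eval x)) ≤ 2 * ε := by
    calc distR (fun x => bval (T2.eval x)) (fun x => bval (T1.eval x))
        ≤ 2 * T1.size / 2 ^ d := trunc_err d T1 hT1rf
      _ ≤ 2 * ε := by
          rw [div_le_iff₀ (by positivity : (0:ℝ) < 2 ^ d)]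
          have hc : (T1.size : ℝ) ≤ (s : ℝ) := by exact_mod_cast hT1sz
          nlinarith [hsd, hc]
  set T3 := prune τ G T2 with hT3
  have hT3sz : T3.size ≤ s := le_trans (prune_size τ T2 G) hT2sz
  have hT3d : T3.depth ≤ d := le_trans (prune_depth τ T2 G) hT2d
  have hT3ew : EwInflR τ G T3 := prune_ewinfl τ T2 G
  -- quality of T2 against G
  have hpT2 : probNe T2.eval f ≤ opt + ε := by
    have h1 : probNe T2.eval f ≤ probNe T2.eval T1.eval + probNe T1.eval f :=
      probNe_triangle _ _ _
    have h2 : probNe T2.eval T1.eval ≤ ε := by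
      rw [probNe_eq_half_distR]
      linarith
    have h3 : probNe T1.eval f = probNe f Tstar.eval := by
      rw [probNe_congr_left T1.eval Tstar.eval f hT1eval, probNe_symm]
    linarith
  have heplenT2 : eplen T2 ≤ Real.logb 2 (s:ℝ) :=
    le_trans (eplen_le_logb_size T2 hT2rf) (logb_mono_size T2.size s (size_pos T2) hT2sz)
  have hdistT2 : distR (fun x => bval (T2.eval x)) G ≤ 2 * opt + 3 * ε := by
    have h1 : MQ δ f T2 ≤ probNe T2.eval f + δ / 2 * eplen T2 := MQ_le_probNe hδ0 hδ2 f T2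
    have h2 : distR (fun x => bval (T2.eval x)) G = 2 * MQ δ f T2 := distR_eq_two_MQ hδ0 hδ2 f T2
    have h3 : δ / 2 * eplen T2 ≤ ε / 2 := by
      have he0 := eplen_nonneg T2
      nlinarith [hδL, heplenT2, hδ0]
    linarith
  -- quality of T3 against G
  have hdistT3 : distR (fun x => bval (T3.eval x)) G ≤ 2 * opt + 5 * ε := by
    have h1 := prune_dist τ hτnonneg T2 G hT2rf
    have h2 : Real.logb 2 (T2.size : ℝ) ≤ Real.logb 2 (s:ℝ) :=
      logb_mono_size T2.size s (size_pos T2) hT2sz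
    have h3 : 2 * τ * Real.logb 2 (T2.size : ℝ) ≤ 2 * ε := by
      have := mul_le_mul_of_nonneg_left h2 (by linarith : (0:ℝ) ≤ 2 * τ)
      nlinarith [hτL]
    rw [← hT3] at h1
    linarith
  -- minimality
  have hmin := hTmin T3 hT3sz hT3d hT3ew
  -- conclude
  have hRFT : ReqFree T := reqFree_of_ewinfl hτpos T G hTew
  have heplenT : eplen T ≤ Real.logb 2 (s:ℝ) :=
    le_trans (eplen_le_logb_size T hRFT) (logb_mono_size T.size s (size_pos T) hTsz)
  have h1 : probNe T.eval f ≤ MQ δ f T + δ / 2 * eplen T := probNe_le_MQ hδ0 hδ2 f T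
  have h2 : distR (fun x => bval (T.eval x)) G = 2 * MQ δ f T := distR_eq_two_MQ hδ0 hδ2 f T
  have h3 : δ / 2 * eplen T ≤ ε / 2 := by
    have he0 := eplen_nonneg T
    nlinarith [hδL, heplenT, hδ0]
  linarith

end S19


set_option maxHeartbeats 2000000

/-- **Agnostic guarantee of the algorithm.** Suppose `f` is `opt`-close to a size-`s`
decision tree `T*` (`s ≥ 2`, `ε ∈ (0,1)`). Set `τ = ε/log₂ s`, `d = ⌈log₂(s/ε)⌉`, and let
`0 ≤ δ ≤ ε/log₂ s`. Then every decision tree of size at most `s` and depth at most `d` that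
minimizes `dist(T, f_δ)` among all such everywhere `τ`-influential trees (w.r.t. `f_δ`)
satisfies `Pr[T(x) ≠ f(x)] ≤ opt + 4ε`; moreover at least one such tree exists. -/
theorem stmt19 {n : ℕ} (f : (Fin n → Bool) → Bool) (s : ℕ) (hs : 2 ≤ s)
    (ε : ℝ) (hε0 : 0 < ε) (hε1 : ε < 1) (opt : ℝ)
    (Tstar : DTree Bool n) (hTstarSize : Tstar.size = s)
    (hopt : probNe f Tstar.eval ≤ opt)
    (τ : ℝ) (hτ : τ = ε / Real.logb 2 s)
    (d : ℕ) (hd : d = ⌈Real.logb 2 (s / ε)⌉₊)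
    (δ : ℝ) (hδ0 : 0 ≤ δ) (hδ : δ ≤ ε / Real.logb 2 s) :
    (∀ T : DTree Bool n, T.size ≤ s → T.depth ≤ d →
        EwInflR τ (smooth δ fun x => bval (f x)) T →
        (∀ T' : DTree Bool n, T'.size ≤ s → T'.depth ≤ d →
            EwInflR τ (smooth δ fun x => bval (f x)) T' →
            distR (fun x => bval (T.eval x)) (smooth δ fun x => bval (f x))
              ≤ distR (fun x => bval (T'.eval x)) (smooth δ fun x => bval (f x))) →
        probNe T.eval f ≤ opt + 4 * ε) ∧
    (∃ T : DTree Bool n, T.size ≤ s ∧ T.depth ≤ d ∧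
        EwInflR τ (smooth δ fun x => bval (f x)) T ∧
        (∀ T' : DTree Bool n, T'.size ≤ s → T'.depth ≤ d →
            EwInflR τ (smooth δ fun x => bval (f x)) T' →
            distR (fun x => bval (T.eval x)) (smooth δ fun x => bval (f x))
              ≤ distR (fun x => bval (T'.eval x)) (smooth δ fun x => bval (f x))) ∧
        probNe T.eval f ≤ opt + 4 * ε) := by
  have hmain := S19.main_bound f s hs ε hε0 hε1 opt Tstar hTstarSize hopt τ hτ d hd δ hδ0 hδ
  refine ⟨hmain, ?_⟩
  -- existence of a minimizer
  classical
  set G : (Fin n → Bool) → ℝ := smooth δ (fun x => bval (f x)) with hG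
  set Φ : ((Fin n → Bool) → Bool) → ℝ := fun gg => distR (fun x => bval (gg x)) G with hΦ
  set P : ℝ → Prop := fun v => ∃ T : DTree Bool n,
      T.size ≤ s ∧ T.depth ≤ d ∧ EwInflR τ G T ∧ Φ T.eval = v with hP
  set V' : Finset ℝ := (Finset.univ.image Φ).filter P with hV'
  have hne : V'.Nonempty := by
    refine ⟨Φ ((DTree.leaf true : DTree Bool n).eval), ?_⟩
    rw [hV', Finset.mem_filter]
    constructor
    · exact Finset.mem_image_of_mem Φ (Finset.mem_univ _)
    · refine ⟨DTree.leaf true, ?_, ?_, ?_, rfl⟩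
      · show 1 ≤ s; omega
      · exact Nat.zero_le d
      · trivial
  set m := V'.min' hne with hm
  have hmem : m ∈ V' := V'.min'_mem hne
  rw [hV', Finset.mem_filter] at hmem
  obtain ⟨-, T0, hsz0, hd0, hew0, hval0⟩ := hmem
  refine ⟨T0, hsz0, hd0, hew0, ?_, ?_⟩
  · -- minimality
    intro T' hsz' hd' hew'
    have hmem' : Φ T'.eval ∈ V' := by
      rw [hV', Finset.mem_filter]
      exact ⟨Finset.mem_image_of_mem Φ (Finset.mem_univ _), T', hsz', hd', hew', rfl⟩
    have := V'.min'_le _ hmem'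
    rw [← hm] at this
    calc distR (fun x => bval (T0.eval x)) G = Φ T0.eval := rfl
      _ = m := hval0
      _ ≤ Φ T'.eval := this
      _ = distR (fun x => bval (T'.eval x)) G := rfl
  · -- the bound, via the first part
    apply hmain T0 hsz0 hd0 hew0
    intro T' hsz' hd' hew'
    have hmem' : Φ T'.eval ∈ V' := by
      rw [hV', Finset.mem_filter]
      exact ⟨Finset.mem_image_of_mem Φ (Finset.mem_univ _), T', hsz', hd', hew', rfl⟩
    have := V'.min'_le _ hmem'
    rw [← hm] at this
    calc distR (fun x => bval (T0.eval x)) G = Φ T0.eval := rfl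
      _ = m := hval0
      _ ≤ Φ T'.eval := this
      _ = distR (fun x => bval (T'.eval x)) G := rfl
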